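/- Let L be an e-cyclic residuated lattice satisfying the left prelinearity law. If every principal polar x^⊥ (x ∈ L) is a normal convex subalgebra of L, then every minimal prime convex subalgebra of L is normal. -/
import Mathlib

universe u

/-- A residuated lattice: a lattice-ordered monoid with left and right residuals.
`ldiv x z` is `x \ z` and `rdiv z y` is `z / y`. -/
class ResiduatedLattice (α : Type u) extends Lattice α, Monoid α where
  ldiv : α → α → α
  rdiv : α → α → α
  mul_le_iff_le_ldiv : ∀ x y z : α, x * y ≤ z ↔ y ≤ ldiv x z
  mul_le_iff_le_rdiv : ∀ x y z : α, x * y ≤ z ↔ x ≤ rdiv z y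

namespace ResiduatedLattice

variable {α : Type u} [ResiduatedLattice α]

/-- `L` is e-cyclic if `x \ e = e / x` for all `x`. -/
def ECyclic (α : Type u) [ResiduatedLattice α] : Prop :=
  ∀ x : α, ldiv x 1 = rdiv 1 x

/-- Absolute value: `|x| = x ⊓ (e / x) ⊓ e`. -/
def absv (x : α) : α := x ⊓ rdiv 1 x ⊓ 1

/-- A convex subalgebra: contains `e`, closed under all the operations, and order-convex. -/
structure IsConvexSubalgebra (H : Set α) : Prop where
  one_mem : (1 : α) ∈ H
  mul_mem : ∀ ⦃x⦄, x ∈ H → ∀ ⦃y⦄, y ∈ H → x * y ∈ H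
  sup_mem : ∀ ⦃x⦄, x ∈ H → ∀ ⦃y⦄, y ∈ H → x ⊔ y ∈ H
  inf_mem : ∀ ⦃x⦄, x ∈ H → ∀ ⦃y⦄, y ∈ H → x ⊓ y ∈ H
  ldiv_mem : ∀ ⦃x⦄, x ∈ H → ∀ ⦃y⦄, y ∈ H → ldiv x y ∈ H
  rdiv_mem : ∀ ⦃x⦄, x ∈ H → ∀ ⦃y⦄, y ∈ H → rdiv x y ∈ H
  convex : ∀ ⦃a⦄, a ∈ H → ∀ ⦃b⦄, b ∈ H → ∀ ⦃x⦄, a ≤ x → x ≤ b → x ∈ H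

/-- `C[S]`: the smallest convex subalgebra containing `S`. -/
def convexClosure (S : Set α) : Set α :=
  ⋂₀ {H : Set α | IsConvexSubalgebra H ∧ S ⊆ H}

end ResiduatedLattice

open ResiduatedLattice

/-- A prime convex subalgebra: a convex subalgebra that is meet-irreducible in the
lattice of convex subalgebras. -/
def IsPrimeConvex {α : Type u} [ResiduatedLattice α] (H : Set α) : Prop :=
  IsConvexSubalgebra H ∧
  ∀ X Y : Set α, IsConvexSubalgebra X → IsConvexSubalgebra Y →
    X ∩ Y ⊆ H → X ⊆ H ∨ Y ⊆ H

/-- A minimal prime convex subalgebra. -/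
def IsMinimalPrimeConvex {α : Type u} [ResiduatedLattice α] (P : Set α) : Prop :=
  IsPrimeConvex P ∧ P ≠ Set.univ ∧
  ∀ Q : Set α, IsPrimeConvex Q → Q ≠ Set.univ → Q ⊆ P → Q = P

/-- The polar `S^⊥ = {a : |a| ⊔ |s| = e for all s ∈ S}`. -/
def polar {α : Type u} [ResiduatedLattice α] (S : Set α) : Set α :=
  {a : α | ∀ s ∈ S, absv a ⊔ absv s = 1}

/-- A convex subalgebra is normal if it is closed under conjugation. -/
def IsNormal {α : Type u} [ResiduatedLattice α] (H : Set α) : Prop :=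
  ∀ x ∈ H, ∀ y : α, ldiv y (x * y) ⊓ 1 ∈ H ∧ rdiv (y * x) y ⊓ 1 ∈ H

namespace RLAux

open ResiduatedLattice

variable {α : Type u} [ResiduatedLattice α]

lemma mul_ldiv_le (x z : α) : x * ldiv x z ≤ z :=
  (mul_le_iff_le_ldiv x (ldiv x z) z).2 le_rfl

lemma rdiv_mul_le (z y : α) : rdiv z y * y ≤ z :=
  (mul_le_iff_le_rdiv (rdiv z y) y z).2 le_rfl

lemma mul_le_mul_left'' {c d : α} (h : c ≤ d) (a : α) : a * c ≤ a * d :=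
  (mul_le_iff_le_ldiv a c (a * d)).2 (h.trans ((mul_le_iff_le_ldiv a d (a * d)).1 le_rfl))

lemma mul_le_mul_right'' {a b : α} (h : a ≤ b) (c : α) : a * c ≤ b * c :=
  (mul_le_iff_le_rdiv a c (b * c)).2 (h.trans ((mul_le_iff_le_rdiv b c (b * c)).1 le_rfl))

lemma mul_le_mul'' {a b c d : α} (h1 : a ≤ b) (h2 : c ≤ d) : a * c ≤ b * d :=
  (mul_le_mul_right'' h1 c).trans (mul_le_mul_left'' h2 b)

lemma pow_le_one'' {u : α} (hu : u ≤ 1) : ∀ n, u ^ n ≤ 1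
  | 0 => by rw [pow_zero]
  | n + 1 => by
      rw [pow_succ]
      exact (mul_le_mul'' (pow_le_one'' hu n) hu).trans (by rw [one_mul])

lemma pow_le_pow'' {u : α} (hu : u ≤ 1) {n m : ℕ} (h : n ≤ m) : u ^ m ≤ u ^ n := by
  obtain ⟨k, rfl⟩ := Nat.exists_eq_add_of_le h
  rw [pow_add]
  exact (mul_le_mul_left'' (pow_le_one'' hu k) _).trans (by rw [mul_one])

lemma pow_le_pow_left'' {a b : α} (h : a ≤ b) : ∀ n, a ^ n ≤ b ^ n
  | 0 => by rw [pow_zero, pow_zero]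
  | n + 1 => by
      rw [pow_succ, pow_succ]
      exact mul_le_mul'' (pow_le_pow_left'' h n) h

lemma mul_sup_le {a b c : α} : a * (b ⊔ c) ≤ a * b ⊔ a * c :=
  (mul_le_iff_le_ldiv a (b ⊔ c) _).2 (sup_le
    ((mul_le_iff_le_ldiv a b _).1 le_sup_left)
    ((mul_le_iff_le_ldiv a c _).1 le_sup_right))

lemma sup_mul_le {a b c : α} : (b ⊔ c) * a ≤ b * a ⊔ c * a :=
  (mul_le_iff_le_rdiv (b ⊔ c) a _).2 (sup_le
    ((mul_le_iff_le_rdiv b a _).1 le_sup_left)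
    ((mul_le_iff_le_rdiv c a _).1 le_sup_right))

lemma absv_le_one (x : α) : absv x ≤ 1 := inf_le_right

lemma absv_le_self (x : α) : absv x ≤ x := le_trans inf_le_left inf_le_left

lemma absv_le_rdiv (x : α) : absv x ≤ rdiv 1 x := le_trans inf_le_left inf_le_right

lemma absv_mul_self_le (x : α) : absv x * x ≤ 1 :=
  (mul_le_mul_right'' (absv_le_rdiv x) x).trans (rdiv_mul_le 1 x)

lemma self_mul_absv_le (hec : ECyclic α) (x : α) : x * absv x ≤ 1 :=
  (mul_le_iff_le_ldiv x (absv x) 1).2 ((absv_le_rdiv x).trans_eq (hec x).symm)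

lemma le_rdiv_one_absv (hec : ECyclic α) (x : α) : x ≤ rdiv 1 (absv x) :=
  (mul_le_iff_le_rdiv x (absv x) 1).1 (self_mul_absv_le hec x)

lemma absv_of_le_one {u : α} (hu : u ≤ 1) : absv u = u := by
  refine le_antisymm (absv_le_self u) (le_inf (le_inf le_rfl ?_) hu)
  exact (mul_le_iff_le_rdiv u u 1).1 ((mul_le_mul'' hu hu).trans (by rw [one_mul]))

lemma absv_one : absv (1 : α) = 1 := absv_of_le_one le_rfl

lemma eq_one_of_absv_eq_one {w : α} (h : absv w = 1) : w = 1 := by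
  refine le_antisymm ?_ (h ▸ absv_le_self w)
  have h1 : (1 : α) ≤ rdiv 1 w := h ▸ absv_le_rdiv w
  calc w = 1 * w := (one_mul w).symm
    _ ≤ rdiv 1 w * w := mul_le_mul_right'' h1 w
    _ ≤ 1 := rdiv_mul_le 1 w

lemma rdiv_one_anti {s t : α} (h : s ≤ t) : rdiv 1 t ≤ rdiv 1 s :=
  (mul_le_iff_le_rdiv (rdiv 1 t) s 1).1 ((mul_le_mul_left'' h _).trans (rdiv_mul_le 1 t))

section ConvexHelpers

variable {H : Set α}

lemma absv_mem (hH : IsConvexSubalgebra H) {w : α} (hw : w ∈ H) : absv w ∈ H :=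
  hH.inf_mem (hH.inf_mem hw (hH.rdiv_mem hH.one_mem hw)) hH.one_mem

lemma mem_of_absv_mem (hH : IsConvexSubalgebra H) (hec : ECyclic α) {w : α} (hw : absv w ∈ H) : w ∈ H :=
  hH.convex hw (hH.rdiv_mem hH.one_mem hw) (absv_le_self w) (le_rdiv_one_absv hec w)

lemma pow_mem (hH : IsConvexSubalgebra H) {x : α} (hx : x ∈ H) : ∀ n, x ^ n ∈ H
  | 0 => by rw [pow_zero]; exact hH.one_mem
  | n + 1 => by rw [pow_succ]; exact hH.mul_mem (pow_mem hH hx n) hx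

lemma mem_of_pow_le_absv (hH : IsConvexSubalgebra H) (hec : ECyclic α) {t w : α} (ht : t ∈ H) {n : ℕ}
    (h : t ^ n ≤ absv w) : w ∈ H :=
  mem_of_absv_mem hH hec (hH.convex (pow_mem hH ht n) hH.one_mem h (absv_le_one w))

end ConvexHelpers

end RLAux
namespace RLAux

open ResiduatedLattice

variable {α : Type u} [ResiduatedLattice α]

/-- The principal convex subalgebra generated by a negative element `t`. -/
def Ht (t : α) : Set α := {w | ∃ n : ℕ, t ^ n ≤ absv w}

lemma Ht_anti {s t : α} (h : s ≤ t) : Ht t ⊆ Ht s := by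
  rintro w ⟨n, hn⟩
  exact ⟨n, (pow_le_pow_left'' h n).trans hn⟩

lemma mem_Ht_self {t : α} (ht : t ≤ 1) : t ∈ Ht t :=
  ⟨1, by rw [pow_one, absv_of_le_one ht]⟩

lemma Ht_subset {t : α} {H : Set α} (hH : IsConvexSubalgebra H) (hec : ECyclic α)
    (ht : t ∈ H) : Ht t ⊆ H := by
  rintro w ⟨n, hn⟩
  exact mem_of_pow_le_absv hH hec ht hn

lemma le_rdiv_one_pow (hec : ECyclic α) {t a : α} {n : ℕ} (h : t ^ n ≤ absv a) :
    a ≤ rdiv 1 (t ^ n) :=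
  (le_rdiv_one_absv hec a).trans (rdiv_one_anti h)

lemma Ht_conv (hec : ECyclic α) {t : α} (ht : t ≤ 1) : IsConvexSubalgebra (Ht t) := by
  constructor
  · -- one_mem
    exact ⟨0, by rw [pow_zero, absv_one]⟩
  · -- mul_mem
    rintro a ⟨n, hn⟩ b ⟨m, hm⟩
    refine ⟨n + m, ?_⟩
    simp only [absv]
    refine le_inf (le_inf ?_ ?_) (pow_le_one'' ht _)
    · calc t ^ (n + m) = t ^ n * t ^ m := pow_add t n m
        _ ≤ a * b := mul_le_mul'' (hn.trans (absv_le_self a)) (hm.trans (absv_le_self b))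
    · rw [← hec (a * b)]
      refine (mul_le_iff_le_ldiv _ _ _).1 ?_
      have hab : a * b ≤ rdiv 1 (t ^ n) * rdiv 1 (t ^ m) :=
        mul_le_mul'' (le_rdiv_one_pow hec hn) (le_rdiv_one_pow hec hm)
      have key : (rdiv 1 (t ^ n) * rdiv 1 (t ^ m)) * (t ^ m * t ^ n) ≤ 1 := by
        calc (rdiv 1 (t ^ n) * rdiv 1 (t ^ m)) * (t ^ m * t ^ n)
            = rdiv 1 (t ^ n) * ((rdiv 1 (t ^ m) * t ^ m) * t ^ n) := by
              rw [mul_assoc, mul_assoc]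
          _ ≤ rdiv 1 (t ^ n) * (1 * t ^ n) :=
              mul_le_mul_left'' (mul_le_mul_right'' (rdiv_mul_le 1 (t ^ m)) _) _
          _ = rdiv 1 (t ^ n) * t ^ n := by rw [one_mul]
          _ ≤ 1 := rdiv_mul_le 1 (t ^ n)
      calc (a * b) * t ^ (n + m) = (a * b) * (t ^ m * t ^ n) := by
            rw [Nat.add_comm n m, pow_add]
        _ ≤ (rdiv 1 (t ^ n) * rdiv 1 (t ^ m)) * (t ^ m * t ^ n) :=
            mul_le_mul_right'' hab _
        _ ≤ 1 := key
  · -- sup_mem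
    rintro a ⟨n, hn⟩ b ⟨m, hm⟩
    refine ⟨n + m, ?_⟩
    simp only [absv]
    refine le_inf (le_inf ?_ ?_) (pow_le_one'' ht _)
    · exact le_sup_of_le_left (((pow_le_pow'' ht (Nat.le_add_right n m)).trans hn).trans
        (absv_le_self a))
    · refine (mul_le_iff_le_rdiv _ _ _).1 ?_
      refine mul_sup_le.trans (sup_le ?_ ?_)
      · calc t ^ (n + m) * a ≤ absv a * a :=
            mul_le_mul_right'' ((pow_le_pow'' ht (Nat.le_add_right n m)).trans hn) a
          _ ≤ 1 := absv_mul_self_le a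
      · calc t ^ (n + m) * b ≤ absv b * b :=
            mul_le_mul_right'' ((pow_le_pow'' ht (Nat.le_add_left m n)).trans hm) b
          _ ≤ 1 := absv_mul_self_le b
  · -- inf_mem
    rintro a ⟨n, hn⟩ b ⟨m, hm⟩
    refine ⟨n + m, ?_⟩
    have hp : t ^ (n + m) ≤ absv a * absv b := by
      rw [pow_add]; exact mul_le_mul'' hn hm
    simp only [absv]
    refine le_inf (le_inf ?_ ?_) (pow_le_one'' ht _)
    · refine hp.trans (le_inf ?_ ?_)
      · exact ((mul_le_mul_left'' (absv_le_one b) _).trans (by rw [mul_one])).trans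
          (absv_le_self a)
      · exact ((mul_le_mul_right'' (absv_le_one a) _).trans (by rw [one_mul])).trans
          (absv_le_self b)
    · refine (mul_le_iff_le_rdiv _ _ _).1 ?_
      calc t ^ (n + m) * (a ⊓ b) ≤ (absv a * absv b) * b :=
          mul_le_mul'' hp inf_le_right
        _ = absv a * (absv b * b) := mul_assoc _ _ _
        _ ≤ absv a * 1 := mul_le_mul_left'' (absv_mul_self_le b) _
        _ ≤ 1 := by rw [mul_one]; exact absv_le_one a
  · -- ldiv_mem
    rintro a ⟨n, hn⟩ b ⟨m, hm⟩
    refine ⟨n + (m + n), ?_⟩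
    simp only [absv]
    refine le_inf (le_inf ?_ ?_) (pow_le_one'' ht _)
    · refine (mul_le_iff_le_ldiv _ _ _).1 ?_
      calc a * t ^ (n + (m + n)) = (a * t ^ n) * (t ^ m * t ^ n) := by
            rw [pow_add, pow_add, mul_assoc]
        _ ≤ 1 * (absv b * 1) := by
            refine mul_le_mul'' ?_ (mul_le_mul'' hm (pow_le_one'' ht n))
            exact (mul_le_iff_le_rdiv a (t ^ n) 1).2 (le_rdiv_one_pow hec hn)
        _ ≤ b := by rw [one_mul, mul_one]; exact absv_le_self b
    · rw [← hec (ldiv a b)]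
      refine (mul_le_iff_le_ldiv _ _ _).1 ?_
      have step1 : ldiv a b * t ^ m ≤ ldiv a 1 := by
        refine (mul_le_iff_le_ldiv a _ 1).1 ?_
        calc a * (ldiv a b * t ^ m) = (a * ldiv a b) * t ^ m := (mul_assoc _ _ _).symm
          _ ≤ b * t ^ m := mul_le_mul_right'' (mul_ldiv_le a b) _
          _ ≤ rdiv 1 (t ^ m) * t ^ m := mul_le_mul_right'' (le_rdiv_one_pow hec hm) _
          _ ≤ 1 := rdiv_mul_le 1 (t ^ m)
      have step2 : ldiv a b * t ^ (m + n) ≤ 1 := by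
        calc ldiv a b * t ^ (m + n) = (ldiv a b * t ^ m) * t ^ n := by
              rw [pow_add, mul_assoc]
          _ ≤ ldiv a 1 * t ^ n := mul_le_mul_right'' step1 _
          _ ≤ rdiv 1 a * a := by
              rw [hec a]
              exact mul_le_mul_left'' (hn.trans (absv_le_self a)) _
          _ ≤ 1 := rdiv_mul_le 1 a
      calc ldiv a b * t ^ (n + (m + n)) ≤ ldiv a b * t ^ (m + n) :=
          mul_le_mul_left'' (pow_le_pow'' ht (Nat.le_add_left (m + n) n)) _
        _ ≤ 1 := step2
  · -- rdiv_mem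
    rintro a ⟨n, hn⟩ b ⟨m, hm⟩
    refine ⟨n + m, ?_⟩
    simp only [absv]
    refine le_inf (le_inf ?_ ?_) (pow_le_one'' ht _)
    · refine (mul_le_iff_le_rdiv _ _ _).1 ?_
      calc t ^ (n + m) * b = t ^ n * (t ^ m * b) := by rw [pow_add, mul_assoc]
        _ ≤ t ^ n * (t ^ m * rdiv 1 (t ^ m)) :=
            mul_le_mul_left'' (mul_le_mul_left'' (le_rdiv_one_pow hec hm) _) _
        _ ≤ t ^ n * 1 := by
            refine mul_le_mul_left'' ?_ _
            rw [← hec (t ^ m)]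
            exact mul_ldiv_le (t ^ m) 1
        _ ≤ a := by rw [mul_one]; exact hn.trans (absv_le_self a)
    · rw [← hec (rdiv a b)]
      refine (mul_le_iff_le_ldiv _ _ _).1 ?_
      calc rdiv a b * t ^ (n + m) = (rdiv a b * t ^ m) * t ^ n := by
            rw [Nat.add_comm n m, pow_add, mul_assoc]
        _ ≤ (rdiv a b * b) * t ^ n :=
            mul_le_mul_right'' (mul_le_mul_left'' (hm.trans (absv_le_self b)) _) _
        _ ≤ a * absv a := mul_le_mul'' (rdiv_mul_le a b) hn
        _ ≤ 1 := self_mul_absv_le hec a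
  · -- convex
    rintro a ⟨n, hn⟩ b ⟨m, hm⟩ w haw hwb
    refine ⟨n + m, ?_⟩
    simp only [absv]
    refine le_inf (le_inf ?_ ?_) (pow_le_one'' ht _)
    · exact (((pow_le_pow'' ht (Nat.le_add_right n m)).trans hn).trans
        (absv_le_self a)).trans haw
    · rw [← hec w]
      refine (mul_le_iff_le_ldiv _ _ _).1 ?_
      calc w * t ^ (n + m) = (w * t ^ m) * t ^ n := by
            rw [Nat.add_comm n m, pow_add, mul_assoc]
        _ ≤ 1 * t ^ n := by
            refine mul_le_mul_right'' ?_ _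
            exact (mul_le_iff_le_rdiv w (t ^ m) 1).2
              (hwb.trans (le_rdiv_one_pow hec hm))
        _ ≤ 1 := by rw [one_mul]; exact pow_le_one'' ht n

/-- The key combinatorial lemma: `(u ⊔ v)^(n+m) ≤ u^n ⊔ v^m` for negative `u, v`. -/
lemma word_le {u v : α} (hu : u ≤ 1) (hv : v ≤ 1) :
    ∀ n m : ℕ, (u ⊔ v) ^ (n + m) ≤ u ^ n ⊔ v ^ m := by
  intro n
  induction n with
  | zero =>
    intro m
    rw [Nat.zero_add, pow_zero]
    exact le_sup_of_le_left (pow_le_one'' (sup_le hu hv) m)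
  | succ n ih =>
    intro m
    induction m with
    | zero =>
      rw [Nat.add_zero, pow_zero]
      exact le_sup_of_le_right (pow_le_one'' (sup_le hu hv) _)
    | succ m ihm =>
      have e1 : (n + 1) + (m + 1) = ((n + 1) + m) + 1 := rfl
      have e2 : (n + 1) + m = n + (m + 1) := by omega
      rw [e1, pow_succ']
      refine sup_mul_le.trans (sup_le ?_ ?_)
      · have h1 : (u ⊔ v) ^ ((n + 1) + m) ≤ u ^ n ⊔ v ^ (m + 1) := by
          rw [e2]; exact ih (m + 1)
        calc u * (u ⊔ v) ^ ((n + 1) + m) ≤ u * (u ^ n ⊔ v ^ (m + 1)) :=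
            mul_le_mul_left'' h1 u
          _ ≤ u * u ^ n ⊔ u * v ^ (m + 1) := mul_sup_le
          _ ≤ u ^ (n + 1) ⊔ v ^ (m + 1) := by
              refine sup_le_sup ?_ ?_
              · rw [← pow_succ']
              · exact (mul_le_mul_right'' hu _).trans (by rw [one_mul])
      · calc v * (u ⊔ v) ^ ((n + 1) + m) ≤ v * (u ^ (n + 1) ⊔ v ^ m) :=
            mul_le_mul_left'' ihm v
          _ ≤ v * u ^ (n + 1) ⊔ v * v ^ m := mul_sup_le
          _ ≤ u ^ (n + 1) ⊔ v ^ (m + 1) := by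
              refine sup_le_sup ?_ ?_
              · exact (mul_le_mul_right'' hv _).trans (by rw [one_mul])
              · rw [← pow_succ']

end RLAux
namespace RLAux

open ResiduatedLattice

variable {α : Type u} [ResiduatedLattice α]

lemma mem_Ht_absv (x : α) : x ∈ Ht (absv x) := ⟨1, by rw [pow_one]⟩

/-- If `x, y ∉ P` for a prime `P`, then `|x| ⊔ |y| ∉ P`. -/
lemma join_absv_notMem (hec : ECyclic α) {P : Set α} (hP : IsPrimeConvex P)
    {x y : α} (hx : x ∉ P) (hy : y ∉ P) : absv x ⊔ absv y ∉ P := by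
  intro ht
  have hXY : Ht (absv x) ∩ Ht (absv y) ⊆ P := by
    rintro w ⟨⟨n, hn⟩, ⟨m, hm⟩⟩
    have h1 : (absv x ⊔ absv y) ^ (n + m) ≤ absv w :=
      (word_le (absv_le_one x) (absv_le_one y) n m).trans (sup_le hn hm)
    exact mem_of_pow_le_absv hP.1 hec ht h1
  rcases hP.2 _ _ (Ht_conv hec (absv_le_one x)) (Ht_conv hec (absv_le_one y)) hXY with h | h
  · exact hx (h (mem_Ht_absv x))
  · exact hy (h (mem_Ht_absv y))

/-- A convex subalgebra satisfying the "join criterion" is prime. -/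
lemma prime_of_crit {H : Set α} (hH : IsConvexSubalgebra H)
    (hcrit : ∀ r s : α, absv r ⊔ absv s ∈ H → r ∈ H ∨ s ∈ H) :
    IsPrimeConvex H := by
  refine ⟨hH, fun X Y hX hY hXY => ?_⟩
  by_cases hXH : X ⊆ H
  · exact Or.inl hXH
  · right
    obtain ⟨r, hrX, hrH⟩ := Set.not_subset.1 hXH
    intro s hs
    have htX : absv r ⊔ absv s ∈ X :=
      hX.convex (absv_mem hX hrX) hX.one_mem le_sup_left
        (sup_le (absv_le_one r) (absv_le_one s))
    have htY : absv r ⊔ absv s ∈ Y :=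
      hY.convex (absv_mem hY hs) hY.one_mem le_sup_right
        (sup_le (absv_le_one r) (absv_le_one s))
    rcases hcrit r s (hXY ⟨htX, htY⟩) with h | h
    · exact absurd h hrH
    · exact h

lemma mem_polar_singleton {w s : α} : w ∈ polar {s} ↔ absv w ⊔ absv s = 1 := by
  simp [polar]

lemma polar_conv (hpolar : ∀ x : α, IsConvexSubalgebra (polar {x})) (S : Set α) :
    IsConvexSubalgebra (polar S) := by
  have hmem : ∀ a : α, a ∈ polar S ↔ ∀ s ∈ S, a ∈ polar {s} := by
    intro a
    simp [polar]
  constructor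
  · exact (hmem 1).2 fun s hs => (hpolar s).one_mem
  · intro x hx y hy
    exact (hmem _).2 fun s hs => (hpolar s).mul_mem ((hmem x).1 hx s hs) ((hmem y).1 hy s hs)
  · intro x hx y hy
    exact (hmem _).2 fun s hs => (hpolar s).sup_mem ((hmem x).1 hx s hs) ((hmem y).1 hy s hs)
  · intro x hx y hy
    exact (hmem _).2 fun s hs => (hpolar s).inf_mem ((hmem x).1 hx s hs) ((hmem y).1 hy s hs)
  · intro x hx y hy
    exact (hmem _).2 fun s hs => (hpolar s).ldiv_mem ((hmem x).1 hx s hs) ((hmem y).1 hy s hs)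
  · intro x hx y hy
    exact (hmem _).2 fun s hs => (hpolar s).rdiv_mem ((hmem x).1 hx s hs) ((hmem y).1 hy s hs)
  · intro a ha b hb x hax hxb
    exact (hmem _).2 fun s hs =>
      (hpolar s).convex ((hmem a).1 ha s hs) ((hmem b).1 hb s hs) hax hxb

lemma one_conv : IsConvexSubalgebra ({1} : Set α) := by
  have hld : ldiv (1 : α) 1 = 1 := by
    refine le_antisymm ?_ ((mul_le_iff_le_ldiv 1 1 1).1 (by rw [mul_one]))
    have := mul_ldiv_le (1 : α) 1
    rwa [one_mul] at this
  have hrd : rdiv (1 : α) 1 = 1 := by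
    refine le_antisymm ?_ ((mul_le_iff_le_rdiv 1 1 1).1 (by rw [mul_one]))
    have := rdiv_mul_le (1 : α) 1
    rwa [mul_one] at this
  constructor
  · rfl
  · rintro x rfl y rfl; simp
  · rintro x rfl y rfl; simp
  · rintro x rfl y rfl; simp
  · rintro x rfl y rfl; simp [hld]
  · rintro x rfl y rfl; simp [hrd]
  · rintro a rfl b rfl x h1 h2
    exact le_antisymm h2 h1

lemma chain_union_conv {c : Set (Set α)} (hc : IsChain (· ⊆ ·) c) (hne : c.Nonempty)
    (hall : ∀ H ∈ c, IsConvexSubalgebra H) : IsConvexSubalgebra (⋃₀ c) := by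
  have pair : ∀ {x y : α} {H₁ H₂ : Set α}, H₁ ∈ c → H₂ ∈ c → x ∈ H₁ → y ∈ H₂ →
      ∃ H ∈ c, x ∈ H ∧ y ∈ H := by
    intro x y H₁ H₂ h1 h2 hx hy
    rcases hc.total h1 h2 with h | h
    · exact ⟨H₂, h2, h hx, hy⟩
    · exact ⟨H₁, h1, hx, h hy⟩
  constructor
  · obtain ⟨H, hH⟩ := hne
    exact ⟨H, hH, (hall H hH).one_mem⟩
  · rintro x ⟨H₁, h1, hx⟩ y ⟨H₂, h2, hy⟩
    obtain ⟨H, hH, hx', hy'⟩ := pair h1 h2 hx hy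
    exact ⟨H, hH, (hall H hH).mul_mem hx' hy'⟩
  · rintro x ⟨H₁, h1, hx⟩ y ⟨H₂, h2, hy⟩
    obtain ⟨H, hH, hx', hy'⟩ := pair h1 h2 hx hy
    exact ⟨H, hH, (hall H hH).sup_mem hx' hy'⟩
  · rintro x ⟨H₁, h1, hx⟩ y ⟨H₂, h2, hy⟩
    obtain ⟨H, hH, hx', hy'⟩ := pair h1 h2 hx hy
    exact ⟨H, hH, (hall H hH).inf_mem hx' hy'⟩
  · rintro x ⟨H₁, h1, hx⟩ y ⟨H₂, h2, hy⟩
    obtain ⟨H, hH, hx', hy'⟩ := pair h1 h2 hx hy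
    exact ⟨H, hH, (hall H hH).ldiv_mem hx' hy'⟩
  · rintro x ⟨H₁, h1, hx⟩ y ⟨H₂, h2, hy⟩
    obtain ⟨H, hH, hx', hy'⟩ := pair h1 h2 hx hy
    exact ⟨H, hH, (hall H hH).rdiv_mem hx' hy'⟩
  · rintro a ⟨H₁, h1, ha⟩ b ⟨H₂, h2, hb⟩ x hax hxb
    obtain ⟨H, hH, ha', hb'⟩ := pair h1 h2 ha hb
    exact ⟨H, hH, (hall H hH).convex ha' hb' hax hxb⟩

/-- The convex subalgebra generated by `Q ∪ {u}` (for negative `u`), described concretely. -/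
def Kset (Q : Set α) (u : α) : Set α := {w | ∃ g, g ∈ Q ∧ g ≤ 1 ∧ w ∈ Ht (g * u)}

lemma Kset_merge {Q : Set α} (hQ : IsConvexSubalgebra Q) {u g₁ g₂ : α}
    (hg₁ : g₁ ∈ Q) (hg₁1 : g₁ ≤ 1) (hg₂ : g₂ ∈ Q) (hg₂1 : g₂ ≤ 1) :
    (g₁ * g₂) ∈ Q ∧ g₁ * g₂ ≤ 1 ∧
      Ht (g₁ * u) ⊆ Ht ((g₁ * g₂) * u) ∧ Ht (g₂ * u) ⊆ Ht ((g₁ * g₂) * u) := by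
  refine ⟨hQ.mul_mem hg₁ hg₂, (mul_le_mul'' hg₁1 hg₂1).trans (by rw [mul_one]), ?_, ?_⟩
  · refine Ht_anti ?_
    calc (g₁ * g₂) * u = g₁ * (g₂ * u) := mul_assoc _ _ _
      _ ≤ g₁ * (1 * u) := mul_le_mul_left'' (mul_le_mul_right'' hg₂1 u) g₁
      _ = g₁ * u := by rw [one_mul]
  · refine Ht_anti ?_
    calc (g₁ * g₂) * u ≤ (1 * g₂) * u := mul_le_mul_right'' (mul_le_mul_right'' hg₁1 g₂) u
      _ = g₂ * u := by rw [one_mul]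

lemma Kset_conv (hec : ECyclic α) {Q : Set α} (hQ : IsConvexSubalgebra Q) {u : α}
    (hu : u ≤ 1) : IsConvexSubalgebra (Kset Q u) := by
  have hgu : ∀ {g : α}, g ≤ 1 → g * u ≤ 1 := fun hg =>
    (mul_le_mul'' hg hu).trans (by rw [mul_one])
  constructor
  · exact ⟨1, hQ.one_mem, le_rfl, (Ht_conv hec (hgu le_rfl)).one_mem⟩
  · rintro x ⟨g₁, hg₁, hg₁1, hx⟩ y ⟨g₂, hg₂, hg₂1, hy⟩
    obtain ⟨hgQ, hgle, s1, s2⟩ := Kset_merge hQ hg₁ hg₁1 hg₂ hg₂1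
    exact ⟨g₁ * g₂, hgQ, hgle, (Ht_conv hec (hgu hgle)).mul_mem (s1 hx) (s2 hy)⟩
  · rintro x ⟨g₁, hg₁, hg₁1, hx⟩ y ⟨g₂, hg₂, hg₂1, hy⟩
    obtain ⟨hgQ, hgle, s1, s2⟩ := Kset_merge hQ hg₁ hg₁1 hg₂ hg₂1
    exact ⟨g₁ * g₂, hgQ, hgle, (Ht_conv hec (hgu hgle)).sup_mem (s1 hx) (s2 hy)⟩
  · rintro x ⟨g₁, hg₁, hg₁1, hx⟩ y ⟨g₂, hg₂, hg₂1, hy⟩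
    obtain ⟨hgQ, hgle, s1, s2⟩ := Kset_merge hQ hg₁ hg₁1 hg₂ hg₂1
    exact ⟨g₁ * g₂, hgQ, hgle, (Ht_conv hec (hgu hgle)).inf_mem (s1 hx) (s2 hy)⟩
  · rintro x ⟨g₁, hg₁, hg₁1, hx⟩ y ⟨g₂, hg₂, hg₂1, hy⟩
    obtain ⟨hgQ, hgle, s1, s2⟩ := Kset_merge hQ hg₁ hg₁1 hg₂ hg₂1
    exact ⟨g₁ * g₂, hgQ, hgle, (Ht_conv hec (hgu hgle)).ldiv_mem (s1 hx) (s2 hy)⟩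
  · rintro x ⟨g₁, hg₁, hg₁1, hx⟩ y ⟨g₂, hg₂, hg₂1, hy⟩
    obtain ⟨hgQ, hgle, s1, s2⟩ := Kset_merge hQ hg₁ hg₁1 hg₂ hg₂1
    exact ⟨g₁ * g₂, hgQ, hgle, (Ht_conv hec (hgu hgle)).rdiv_mem (s1 hx) (s2 hy)⟩
  · rintro a ⟨g₁, hg₁, hg₁1, ha⟩ b ⟨g₂, hg₂, hg₂1, hb⟩ x hax hxb
    obtain ⟨hgQ, hgle, s1, s2⟩ := Kset_merge hQ hg₁ hg₁1 hg₂ hg₂1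
    exact ⟨g₁ * g₂, hgQ, hgle, (Ht_conv hec (hgu hgle)).convex (s1 ha) (s2 hb) hax hxb⟩

lemma subset_Kset {Q : Set α} (hQ : IsConvexSubalgebra Q) {u : α} (hu : u ≤ 1) :
    Q ⊆ Kset Q u := by
  intro q hq
  refine ⟨absv q, absv_mem hQ hq, absv_le_one q, 1, ?_⟩
  rw [pow_one]
  exact (mul_le_mul_left'' hu _).trans (by rw [mul_one])

lemma mem_Kset_self {Q : Set α} (hQ : IsConvexSubalgebra Q) {u : α} (hu : u ≤ 1) :
    u ∈ Kset Q u :=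
  ⟨1, hQ.one_mem, le_rfl, 1, by rw [pow_one, one_mul, absv_of_le_one hu]⟩

end RLAux
namespace RLAux

open ResiduatedLattice

variable {α : Type u} [ResiduatedLattice α]

/-- Core lemma: if `P` is a minimal prime and `a ∈ P`, then `a` lies in the polar of some
element outside `P`. -/
lemma core (hec : ECyclic α) {P : Set α} (hP : IsMinimalPrimeConvex P)
    {a : α} (ha : a ∈ P) : ∃ z, z ∉ P ∧ absv a ⊔ absv z = 1 := by
  obtain ⟨⟨hPc, hPp⟩, hPu, hPmin⟩ := hP
  by_cases haone : absv a = 1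
  · obtain ⟨z, hz⟩ := (Set.ne_univ_iff_exists_notMem P).1 hPu
    exact ⟨z, hz, by rw [haone]; exact sup_eq_left.2 (absv_le_one z)⟩
  by_contra hcon
  push_neg at hcon
  set M : Set α :=
    {m | (∃ x, x ∉ P ∧ m = absv x) ∨ m = absv a ∨ (∃ x, x ∉ P ∧ m = absv a ⊔ absv x)}
    with hMdef
  have hMle : ∀ m ∈ M, m ≤ 1 := by
    rintro m (⟨x, hx, rfl⟩ | rfl | ⟨x, hx, rfl⟩)
    · exact absv_le_one x
    · exact absv_le_one a
    · exact sup_le (absv_le_one a) (absv_le_one x)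
  have hMone : (1 : α) ∉ M := by
    rintro (⟨x, hx, hxe⟩ | he | ⟨x, hx, hxe⟩)
    · have hx1 : x = 1 := eq_one_of_absv_eq_one hxe.symm
      exact hx (hx1 ▸ hPc.one_mem)
    · exact haone he.symm
    · exact hcon x hx hxe.symm
  have hNN : ∀ {x y : α}, x ∉ P → y ∉ P → ∃ z, z ∉ P ∧ absv x ⊔ absv y = absv z := by
    intro x y hx hy
    refine ⟨absv x ⊔ absv y, join_absv_notMem hec ⟨hPc, hPp⟩ hx hy, ?_⟩
    rw [absv_of_le_one (sup_le (absv_le_one x) (absv_le_one y))]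
  have hMsup : ∀ m₁ ∈ M, ∀ m₂ ∈ M, m₁ ⊔ m₂ ∈ M := by
    rintro m₁ (⟨x, hx, rfl⟩ | rfl | ⟨x, hx, rfl⟩) m₂ (⟨y, hy, rfl⟩ | rfl | ⟨y, hy, rfl⟩)
    · obtain ⟨z, hz, he⟩ := hNN hx hy
      exact Or.inl ⟨z, hz, he⟩
    · exact Or.inr (Or.inr ⟨x, hx, sup_comm _ _⟩)
    · obtain ⟨z, hz, he⟩ := hNN hx hy
      refine Or.inr (Or.inr ⟨z, hz, ?_⟩)
      rw [sup_left_comm, he]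
    · exact Or.inr (Or.inr ⟨y, hy, rfl⟩)
    · exact Or.inr (Or.inl (sup_idem _))
    · refine Or.inr (Or.inr ⟨y, hy, ?_⟩)
      rw [← sup_assoc, sup_idem]
    · obtain ⟨z, hz, he⟩ := hNN hx hy
      refine Or.inr (Or.inr ⟨z, hz, ?_⟩)
      rw [sup_assoc, he]
    · refine Or.inr (Or.inr ⟨x, hx, ?_⟩)
      rw [sup_assoc, sup_comm (absv x) (absv a), ← sup_assoc, sup_idem]
    · obtain ⟨z, hz, he⟩ := hNN hx hy
      refine Or.inr (Or.inr ⟨z, hz, ?_⟩)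
      rw [sup_sup_sup_comm, sup_idem, he]
  -- Zorn's lemma
  set S : Set (Set α) := {H | IsConvexSubalgebra H ∧ H ∩ M = ∅} with hSdef
  have hchain : ∀ c ⊆ S, IsChain (· ⊆ ·) c → c.Nonempty →
      ∃ ub ∈ S, ∀ s ∈ c, s ⊆ ub := by
    intro c hcS hc hne
    refine ⟨⋃₀ c, ⟨chain_union_conv hc hne fun H hH => (hcS hH).1, ?_⟩,
      fun s hs => Set.subset_sUnion_of_mem hs⟩
    rw [Set.eq_empty_iff_forall_notMem]
    rintro m ⟨⟨H, hH, hmH⟩, hmM⟩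
    exact Set.eq_empty_iff_forall_notMem.1 (hcS hH).2 m ⟨hmH, hmM⟩
  have hS1 : ({1} : Set α) ∈ S := by
    refine ⟨one_conv, ?_⟩
    rw [Set.eq_empty_iff_forall_notMem]
    rintro m ⟨rfl, hmM⟩
    exact hMone hmM
  obtain ⟨Q, -, hQmax⟩ := zorn_subset_nonempty S hchain {1} hS1
  have hQc : IsConvexSubalgebra Q := hQmax.1.1
  have hQM : Q ∩ M = ∅ := hQmax.1.2
  have hQnotM : ∀ {w : α}, w ∈ Q → w ∉ M := fun hw hm =>
    Set.eq_empty_iff_forall_notMem.1 hQM _ ⟨hw, hm⟩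
  have hcrit : ∀ r s : α, absv r ⊔ absv s ∈ Q → r ∈ Q ∨ s ∈ Q := by
    intro r s hrs
    by_contra hboth
    push_neg at hboth
    obtain ⟨hr, hs⟩ := hboth
    have hKmeet : ∀ {w : α}, w ∉ Q →
        ∃ m ∈ M, ∃ g ∈ Q, g ≤ 1 ∧ m ∈ Ht (g * absv w) := by
      intro w hw
      have hKc : IsConvexSubalgebra (Kset Q (absv w)) := Kset_conv hec hQc (absv_le_one w)
      have hQK : Q ⊆ Kset Q (absv w) := subset_Kset hQc (absv_le_one w)
      by_cases hKM : Kset Q (absv w) ∩ M = ∅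
      · have hsub : Kset Q (absv w) ⊆ Q := hQmax.2 ⟨hKc, hKM⟩ hQK
        exact absurd (mem_of_absv_mem hQc hec (hsub (mem_Kset_self hQc (absv_le_one w)))) hw
      · obtain ⟨m, ⟨g, hg, hg1, hmHt⟩, hmM⟩ := Set.nonempty_iff_ne_empty.2 hKM
        exact ⟨m, hmM, g, hg, hg1, hmHt⟩
    obtain ⟨m₁, hm₁M, g₁, hg₁, hg₁1, hm₁Ht⟩ := hKmeet hr
    obtain ⟨m₂, hm₂M, g₂, hg₂, hg₂1, hm₂Ht⟩ := hKmeet hs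
    have hgQ : g₁ * g₂ ∈ Q := hQc.mul_mem hg₁ hg₂
    have hgle : g₁ * g₂ ≤ 1 := (mul_le_mul'' hg₁1 hg₂1).trans (by rw [mul_one])
    obtain ⟨N₁, hN₁⟩ := (Kset_merge (u := absv r) hQc hg₁ hg₁1 hg₂ hg₂1).2.2.1 hm₁Ht
    obtain ⟨N₂, hN₂⟩ := (Kset_merge (u := absv s) hQc hg₁ hg₁1 hg₂ hg₂1).2.2.2 hm₂Ht
    set g := g₁ * g₂
    have hur : g * absv r ≤ 1 := (mul_le_mul'' hgle (absv_le_one r)).trans (by rw [mul_one])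
    have hus : g * absv s ≤ 1 := (mul_le_mul'' hgle (absv_le_one s)).trans (by rw [mul_one])
    set N := N₁ + N₂
    have hbr : (g * absv r) ^ N ≤ absv m₁ :=
      (pow_le_pow'' hur (Nat.le_add_right N₁ N₂)).trans hN₁
    have hbs : (g * absv s) ^ N ≤ absv m₂ :=
      (pow_le_pow'' hus (Nat.le_add_left N₂ N₁)).trans hN₂
    have hq : (g * (absv r ⊔ absv s)) ^ (N + N) ≤ m₁ ⊔ m₂ := by
      calc (g * (absv r ⊔ absv s)) ^ (N + N)
          ≤ (g * absv r ⊔ g * absv s) ^ (N + N) := pow_le_pow_left'' mul_sup_le _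
        _ ≤ (g * absv r) ^ N ⊔ (g * absv s) ^ N := word_le hur hus N N
        _ ≤ absv m₁ ⊔ absv m₂ := sup_le_sup hbr hbs
        _ ≤ m₁ ⊔ m₂ := sup_le_sup (absv_le_self m₁) (absv_le_self m₂)
    have hqQ : (g * (absv r ⊔ absv s)) ^ (N + N) ∈ Q :=
      pow_mem hQc (hQc.mul_mem hgQ hrs) _
    have hm12Q : m₁ ⊔ m₂ ∈ Q :=
      hQc.convex hqQ hQc.one_mem hq (sup_le (hMle _ hm₁M) (hMle _ hm₂M))
    exact hQnotM hm12Q (hMsup _ hm₁M _ hm₂M)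
  have hQprime : IsPrimeConvex Q := prime_of_crit hQc hcrit
  have hQP : Q ⊆ P := by
    intro x hx
    by_contra hxP
    exact hQnotM (absv_mem hQc hx) (Or.inl ⟨x, hxP, rfl⟩)
  have haQ : a ∉ Q := fun h => hQnotM (absv_mem hQc h) (Or.inr (Or.inl rfl))
  have hQuniv : Q ≠ Set.univ := fun h => haQ (h ▸ Set.mem_univ a)
  have hQP' : Q = P := hPmin Q hQprime hQuniv hQP
  exact haQ (by rw [hQP']; exact ha)

end RLAux

/-- under left prelinearity, if all principal polars are normal convex
subalgebras, then all minimal prime convex subalgebras are normal. -/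
theorem stmt14 {α : Type u} [ResiduatedLattice α] (hec : ECyclic α)
    (hpre : ∀ x y : α, (ldiv x y ⊓ 1) ⊔ (ldiv y x ⊓ 1) = 1)
    (hpolar : ∀ x : α, IsConvexSubalgebra (polar {x}) ∧ IsNormal (polar {x})) :
    ∀ P : Set α, IsMinimalPrimeConvex P → IsNormal P := by
  intro P hP
  have hPc : IsConvexSubalgebra P := hP.1.1
  have hPp := hP.1.2
  intro x hx y
  obtain ⟨z, hzP, hz⟩ := RLAux.core hec hP hx
  have hxz : x ∈ polar {z} := RLAux.mem_polar_singleton.2 hz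
  have hzz : z ∈ polar (polar ({z} : Set α)) := by
    intro s hs
    rw [sup_comm]
    exact RLAux.mem_polar_singleton.1 hs
  have hYc : IsConvexSubalgebra (polar (polar ({z} : Set α))) :=
    RLAux.polar_conv (fun w => (hpolar w).1) _
  have hXY : polar {z} ∩ polar (polar ({z} : Set α)) ⊆ P := by
    rintro w ⟨hw1, hw2⟩
    have h1 : absv w ⊔ absv w = 1 := hw2 w hw1
    have h2 : w = 1 := RLAux.eq_one_of_absv_eq_one (by rwa [sup_idem] at h1)
    rw [h2]
    exact hPc.one_mem
  rcases hPp _ _ (hpolar z).1 hYc hXY with h | h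
  · obtain ⟨h1, h2⟩ := (hpolar z).2 x hxz y
    exact ⟨h h1, h h2⟩
  · exact absurd (h hzz) hzP
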